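/- With notation as in context: if F is a 2-starter under G, then the difference list of the constructed graph H covers every nonidentity element of G × ℤ_n. -/

import Mathlib

open SimpleGraph

/-- The image of a graph on `G ∪ {∞}` under right multiplication by `g` (with `∞ g = ∞`). -/
def shiftG {G : Type*} [Group G] (F : SimpleGraph (Option G)) (g : G) :
    SimpleGraph (Option G) :=
  F.map (Equiv.optionCongr (Equiv.mulRight g)).toEmbedding

/-- The `G`-stabilizer of a graph on `G ∪ {∞}`. -/
def stabG {G : Type*} [Group G] (F : SimpleGraph (Option G)) : Set G :=
  {g | shiftG F g = F}

/-- A `k`-factor: a spanning `k`-regular subgraph of the complete graph. -/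
def IsKFactor {V : Type*} (k : ℕ) (F : SimpleGraph V) : Prop :=
  ∀ v : V, (F.neighborSet v).ncard = k

/-- A `k`-factorization: a set of `k`-factors whose edges partition the complete graph. -/
def IsKFactorization {V : Type*} (k : ℕ) (𝓕 : Set (SimpleGraph V)) : Prop :=
  (∀ F ∈ 𝓕, IsKFactor k F) ∧
  ∀ u v : V, u ≠ v → ∃! F, F ∈ 𝓕 ∧ F.Adj u v

/-- A family of graphs on `G ∪ {∞}` is `1`-rotational if it is closed under the
right multiplication action of `G`. -/
def IsRotational {G : Type*} [Group G] (𝓕 : Set (SimpleGraph (Option G))) : Prop :=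
  ∀ F ∈ 𝓕, ∀ g : G, shiftG F g ∈ 𝓕

/-- The difference list of a graph on `G ∪ {∞}` covers every nonidentity element of `G`. -/
def DiffCovers {G : Type*} [Group G] (F : SimpleGraph (Option G)) : Prop :=
  ∀ d : G, d ≠ 1 → ∃ a b : G, F.Adj (some a) (some b) ∧ a * b⁻¹ = d

/-- A `k`-starter under `G`: a `k`-factor whose `G`-stabilizer has order `k` and whose
difference list covers `G ∖ {1}`. -/
def IsStarter {G : Type*} [Group G] (k : ℕ) (F : SimpleGraph (Option G)) : Prop :=
  IsKFactor k F ∧ (stabG F).ncard = k ∧ DiffCovers F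

/-- The graph `H` on `(G × ℤ_n) ∪ {∞}` constructed from a `2`-factor `F` of the complete
graph on `G ∪ {∞}`: join `∞` to `(x,k)` for `x ~ ∞` in `F`; join `(x,k)` to `(x,r)` for
`x ~ ∞` in `F` and `k ≠ r`; join `(x,k)` to `(y,r)` for every edge `[x,y]` of `F`
avoiding `∞`. -/
def Hgraph {G : Type*} [Group G] (F : SimpleGraph (Option G)) (n : ℕ) :
    SimpleGraph (Option (G × Multiplicative (ZMod n))) :=
  SimpleGraph.fromRel (fun u v =>
    (∃ (x : G) (k : Multiplicative (ZMod n)),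
        F.Adj none (some x) ∧ u = none ∧ v = some (x, k)) ∨
    (∃ (x : G) (k r : Multiplicative (ZMod n)),
        F.Adj none (some x) ∧ k ≠ r ∧ u = some (x, k) ∧ v = some (x, r)) ∨
    (∃ (x y : G) (k r : Multiplicative (ZMod n)),
        F.Adj (some x) (some y) ∧ u = some (x, k) ∧ v = some (y, r)))

theorem stmt11 {G : Type*} [Group G] [Fintype G] (n : ℕ) (hn : 1 ≤ n)
    (F : SimpleGraph (Option G)) (hF : IsStarter 2 F) :
    DiffCovers (Hgraph F n) := by
  obtain ⟨hfac, hstab, hcov⟩ := hF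
  rintro ⟨g, z⟩ hd
  by_cases hg : g = 1
  · subst hg
    have hz : z ≠ 1 := fun h => hd (by simp [h, Prod.ext_iff])
    -- find a neighbor of ∞ in F
    have h2 : (F.neighborSet none).ncard = 2 := hfac none
    have hne : (F.neighborSet none).Nonempty := by
      rcases Set.eq_empty_or_nonempty (F.neighborSet none) with h | h
      · rw [h] at h2; simp at h2
      · exact h
    obtain ⟨v, hv⟩ := hne
    obtain ⟨x, rfl⟩ : ∃ x : G, v = some x := by
      cases v with
      | none => exact absurd hv (F.loopless.irrefl none)
      | some x => exact ⟨x, rfl⟩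
    refine ⟨(x, z), (x, 1), ?_, by simp⟩
    constructor
    · intro h
      apply hz
      have := (Option.some_injective _ h)
      exact (Prod.ext_iff.mp this).2
    · left
      exact Or.inr (Or.inl ⟨x, z, 1, hv, hz, rfl, rfl⟩)
  · obtain ⟨a, b, hab, habd⟩ := hcov g hg
    refine ⟨(a, z), (b, 1), ?_, by simp [habd, Prod.ext_iff]⟩
    constructor
    · intro h
      have := (Option.some_injective _ h)
      have hab1 : a = b := (Prod.ext_iff.mp this).1
      exact hg (by rw [← habd, hab1, mul_inv_cancel])
    · left
      exact Or.inr (Or.inr ⟨a, b, z, 1, hab, rfl, rfl⟩)
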